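/- The Möbius–Kantor graph MK is a connected 3-regular simple graph on 16 vertices, and there exist subgroups A ≤ B ≤ Aut(MK) such that B acts sharply transitively on the set of 2-arcs of MK and A acts sharply transitively on the set of arcs of MK (so |B| = 96 and |A| = 48). -/

import Mathlib

/-- The underlying set of the group `R`: quadruples over `F₂`. -/
abbrev RSet := ZMod 2 × ZMod 2 × ZMod 2 × ZMod 2

/-- The multiplication of the group `R` of order 16:
`(α₁,β₁,γ₁,δ₁)·(α₂,β₂,γ₂,δ₂) = (α₁+α₂, β₁+β₂, γ₁+γ₂, δ₁+δ₂+β₁α₂+γ₁β₂+γ₁α₂)`. -/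
def rmul (p q : RSet) : RSet :=
  (p.1 + q.1, p.2.1 + q.2.1, p.2.2.1 + q.2.2.1,
   p.2.2.2 + q.2.2.2 + p.2.1 * q.1 + p.2.2.1 * q.2.1 + p.2.2.1 * q.1)

def aR : RSet := (1, 0, 0, 0)
def bR : RSet := (0, 1, 0, 0)
def cR : RSet := (0, 0, 1, 0)

lemma rmul_aa : ∀ g : RSet, rmul aR (rmul aR g) = g := by decide
lemma rmul_bb : ∀ g : RSet, rmul bR (rmul bR g) = g := by decide
lemma rmul_cc : ∀ g : RSet, rmul cR (rmul cR g) = g := by decide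

/-- The Möbius–Kantor graph: vertex set `R`, with distinct `g, h` adjacent
iff `h = sg` for some `s ∈ {a, b, c}`. -/
def MK : SimpleGraph RSet where
  Adj g h := g ≠ h ∧ (h = rmul aR g ∨ h = rmul bR g ∨ h = rmul cR g)
  symm := by
    constructor
    rintro g h ⟨hne, h1 | h1 | h1⟩
    · exact ⟨hne.symm, Or.inl (by rw [h1, rmul_aa])⟩
    · exact ⟨hne.symm, Or.inr (Or.inl (by rw [h1, rmul_bb]))⟩
    · exact ⟨hne.symm, Or.inr (Or.inr (by rw [h1, rmul_cc]))⟩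
  loopless := ⟨fun g hg => hg.1 rfl⟩

/-- A permutation `g` of the vertex set is an automorphism of the graph `Γ`. -/
def IsGraphAut {V : Type*} (Γ : SimpleGraph V) (g : Equiv.Perm V) : Prop :=
  ∀ u v : V, Γ.Adj (g u) (g v) ↔ Γ.Adj u v

/-- `G` acts sharply transitively (transitively and freely) on the arcs of `Γ`. -/
def SharplyArcTransitiveOn {V : Type*} (Γ : SimpleGraph V)
    (G : Subgroup (Equiv.Perm V)) : Prop :=
  ∀ u v u' v' : V, Γ.Adj u v → Γ.Adj u' v' →
    ∃! g : G, (g : Equiv.Perm V) u = u' ∧ (g : Equiv.Perm V) v = v'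

/-- `G` acts sharply transitively (transitively and freely) on the 2-arcs of `Γ`. -/
def SharplyTwoArcTransitiveOn {V : Type*} (Γ : SimpleGraph V)
    (G : Subgroup (Equiv.Perm V)) : Prop :=
  ∀ u v w u' v' w' : V, Γ.Adj u v → Γ.Adj v w → u ≠ w →
    Γ.Adj u' v' → Γ.Adj v' w' → u' ≠ w' →
      ∃! g : G, (g : Equiv.Perm V) u = u' ∧ (g : Equiv.Perm V) v = v' ∧
        (g : Equiv.Perm V) w = w'

set_option maxHeartbeats 4000000
set_option synthInstance.maxSize 1000
set_option synthInstance.maxHeartbeats 1000000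

section Aux

instance : DecidableRel MK.Adj := fun g h =>
  inferInstanceAs (Decidable (g ≠ h ∧ (h = rmul aR g ∨ h = rmul bR g ∨ h = rmul cR g)))

def eR : RSet := (0, 0, 0, 0)

/-- The six automorphisms of `R` permuting `{a,b,c}`. -/
def sig : Fin 6 → RSet → RSet
  | 0 => fun p => p
  | 1 => fun p => (p.1, p.2.2.1, p.2.1, p.2.2.2 + p.2.1 * p.2.2.1)
  | 2 => fun p => (p.2.1, p.1, p.2.2.1, p.2.2.2 + p.1 * p.2.1)
  | 3 => fun p => (p.2.2.1, p.1, p.2.1, p.2.2.2 + p.2.2.1 * p.1 + p.2.2.1 * p.2.1)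
  | 4 => fun p => (p.2.1, p.2.2.1, p.1, p.2.2.2 + p.1 * p.2.1 + p.1 * p.2.2.1)
  | 5 => fun p => (p.2.2.1, p.2.1, p.1,
      p.2.2.2 + p.1 * p.2.1 + p.1 * p.2.2.1 + p.2.1 * p.2.2.1)

/-- Composition table: `sig s ∘ sig t = sig (smul s t)`. -/
def smul : Fin 6 → Fin 6 → Fin 6
  | 0 => ![0, 1, 2, 3, 4, 5]
  | 1 => ![1, 0, 4, 5, 2, 3]
  | 2 => ![2, 3, 0, 1, 5, 4]
  | 3 => ![3, 2, 5, 4, 0, 1]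
  | 4 => ![4, 5, 1, 0, 3, 2]
  | 5 => ![5, 4, 3, 2, 1, 0]

def sinv : Fin 6 → Fin 6 := ![0, 1, 2, 4, 3, 5]

/-- Inverse in the group `R`. -/
def rInv (p : RSet) : RSet :=
  (p.1, p.2.1, p.2.2.1, p.2.2.2 + p.1 * p.2.1 + p.2.1 * p.2.2.1 + p.2.2.1 * p.1)

/-- The candidate automorphism `x ↦ (sig s x) · r`. -/
def pm (s : Fin 6) (r : RSet) : RSet → RSet := fun x => rmul (sig s x) r

-- basic computational facts (all small `decide`s)
lemma sig_hom : ∀ (s : Fin 6) (x y : RSet),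
    sig s (rmul x y) = rmul (sig s x) (sig s y) := by decide
lemma sig_comp : ∀ (s t : Fin 6) (x : RSet), sig s (sig t x) = sig (smul s t) x := by decide
lemma rmul_assoc : ∀ x y z : RSet, rmul (rmul x y) z = rmul x (rmul y z) := by decide
lemma rmul_rInv : ∀ x : RSet, rmul x (rInv x) = eR := by decide
lemma rInv_rmul : ∀ x : RSet, rmul (rInv x) x = eR := by decide
lemma rmul_eR : ∀ x : RSet, rmul x eR = x := by decide
lemma eR_rmul : ∀ x : RSet, rmul eR x = x := by decide
lemma sig_eR : ∀ s : Fin 6, sig s eR = eR := by decide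
lemma sig_rInv : ∀ (s : Fin 6) (x : RSet), sig s (rInv x) = rInv (sig s x) := by decide
lemma smul_sinv_left : ∀ s : Fin 6, smul (sinv s) s = 0 := by decide
lemma smul_sinv_right : ∀ s : Fin 6, smul s (sinv s) = 0 := by decide
lemma sig_zero (x : RSet) : sig 0 x = x := rfl

lemma pm_comp (s t : Fin 6) (r q : RSet) (x : RSet) :
    pm s r (pm t q x) = pm (smul s t) (rmul (sig s q) r) x := by
  show rmul (sig s (rmul (sig t x) q)) r = rmul (sig (smul s t) x) (rmul (sig s q) r)
  rw [sig_hom, sig_comp, rmul_assoc]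

lemma pm_zero : ∀ x : RSet, pm 0 eR x = x := fun x => rmul_eR x

lemma pm_left_inv (s : Fin 6) (r : RSet) (x : RSet) :
    pm (sinv s) (rInv (sig (sinv s) r)) (pm s r x) = x := by
  rw [pm_comp, smul_sinv_left, rmul_rInv, pm_zero]

lemma pm_right_inv (s : Fin 6) (r : RSet) (x : RSet) :
    pm s r (pm (sinv s) (rInv (sig (sinv s) r)) x) = x := by
  rw [pm_comp, smul_sinv_right, sig_rInv, sig_comp, smul_sinv_right, sig_zero,
    rInv_rmul, pm_zero]

/-- The permutation of the vertex set given by `pm s r`. -/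
def pmE (s : Fin 6) (r : RSet) : Equiv.Perm RSet :=
  ⟨pm s r, pm (sinv s) (rInv (sig (sinv s) r)), pm_left_inv s r, pm_right_inv s r⟩

lemma pmE_mul (s t : Fin 6) (r q : RSet) :
    pmE s r * pmE t q = pmE (smul s t) (rmul (sig s q) r) :=
  Equiv.ext fun x => pm_comp s t r q x

lemma pmE_inv (s : Fin 6) (r : RSet) :
    (pmE s r)⁻¹ = pmE (sinv s) (rInv (sig (sinv s) r)) := Equiv.ext fun _ => rfl

lemma pmE_one : (1 : Equiv.Perm RSet) = pmE 0 eR :=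
  Equiv.ext fun x => (pm_zero x).symm

abbrev IsGen (t : RSet) : Prop := t = aR ∨ t = bR ∨ t = cR

lemma sig_gen : ∀ (s : Fin 6) (t : RSet), IsGen t → IsGen (sig s t) := by decide

lemma pm_injective (s : Fin 6) (r : RSet) : Function.Injective (pm s r) := by
  intro x y h
  have := congrArg (pm (sinv s) (rInv (sig (sinv s) r))) h
  rwa [pm_left_inv, pm_left_inv] at this

lemma adj_of_gen {t u v : RSet} (ht : IsGen t) (huv : u ≠ v) (h : v = rmul t u) :
    MK.Adj u v := by
  refine ⟨huv, ?_⟩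
  rcases ht with rfl | rfl | rfl
  · exact Or.inl h
  · exact Or.inr (Or.inl h)
  · exact Or.inr (Or.inr h)

lemma gen_of_adj {u v : RSet} (h : MK.Adj u v) : ∃ t, IsGen t ∧ v = rmul t u := by
  obtain ⟨-, h1 | h1 | h1⟩ := h
  · exact ⟨aR, Or.inl rfl, h1⟩
  · exact ⟨bR, Or.inr (Or.inl rfl), h1⟩
  · exact ⟨cR, Or.inr (Or.inr rfl), h1⟩

lemma pm_gen (s : Fin 6) (r : RSet) (t u : RSet) :
    pm s r (rmul t u) = rmul (sig s t) (pm s r u) := by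
  show rmul (sig s (rmul t u)) r = rmul (sig s t) (rmul (sig s u) r)
  rw [sig_hom, rmul_assoc]

lemma pm_adj_mp (s : Fin 6) (r : RSet) (u v : RSet) (h : MK.Adj u v) :
    MK.Adj (pm s r u) (pm s r v) := by
  obtain ⟨t, ht, rfl⟩ := gen_of_adj h
  exact adj_of_gen (sig_gen s t ht) (fun he => h.ne (pm_injective s r he))
    (pm_gen s r t u)

lemma pm_adj (s : Fin 6) (r : RSet) (u v : RSet) :
    MK.Adj (pm s r u) (pm s r v) ↔ MK.Adj u v := by
  refine ⟨fun h => ?_, pm_adj_mp s r u v⟩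
  have := pm_adj_mp (sinv s) (rInv (sig (sinv s) r)) _ _ h
  rwa [pm_left_inv, pm_left_inv] at this

/-- Membership predicate for the big group `B`. -/
def memB (g : Equiv.Perm RSet) : Prop := ∃ s r, g = pmE s r

abbrev rot (s : Fin 6) : Prop := s = 0 ∨ s = 3 ∨ s = 4

lemma rot_smul : ∀ s t, rot s → rot t → rot (smul s t) := by decide
lemma rot_sinv : ∀ s, rot s → rot (sinv s) := by decide

/-- Membership predicate for the small group `A`. -/
def memA (g : Equiv.Perm RSet) : Prop := ∃ s r, rot s ∧ g = pmE s r

def Bgrp : Subgroup (Equiv.Perm RSet) where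
  carrier := {g | memB g}
  one_mem' := ⟨0, eR, pmE_one⟩
  mul_mem' := by
    rintro g h ⟨s, r, rfl⟩ ⟨t, q, rfl⟩
    exact ⟨smul s t, rmul (sig s q) r, pmE_mul s t r q⟩
  inv_mem' := by
    rintro g ⟨s, r, rfl⟩
    exact ⟨sinv s, rInv (sig (sinv s) r), pmE_inv s r⟩

def Agrp : Subgroup (Equiv.Perm RSet) where
  carrier := {g | memA g}
  one_mem' := ⟨0, eR, Or.inl rfl, pmE_one⟩
  mul_mem' := by
    rintro g h ⟨s, r, hs, rfl⟩ ⟨t, q, ht, rfl⟩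
    exact ⟨smul s t, rmul (sig s q) r, rot_smul s t hs ht, pmE_mul s t r q⟩
  inv_mem' := by
    rintro g ⟨s, r, hs, rfl⟩
    exact ⟨sinv s, rInv (sig (sinv s) r), rot_sinv s hs, pmE_inv s r⟩

lemma rmul_right_cancel : ∀ {x y : RSet} (r : RSet), rmul x r = rmul y r → x = y := by
  intro x y r h
  have := congrArg (fun z => rmul z (rInv r)) h
  simpa only [rmul_assoc, rmul_rInv, rmul_eR] using this

-- selection of an automorphism with prescribed images of `aR`, `bR`
lemma sel2 : ∀ t t' : RSet, IsGen t → IsGen t' → t ≠ t' →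
    ∃ s : Fin 6, sig s aR = t ∧ sig s bR = t' := by decide

lemma sel1 : ∀ t : RSet, IsGen t → ∃ s : Fin 6, rot s ∧ sig s aR = t := by decide

lemma pm_eR (s : Fin 6) (r : RSet) : pm s r eR = r := by
  show rmul (sig s eR) r = r
  rw [sig_eR, eR_rmul]

-- existence at the base 2-arc (aR, eR, bR)
lemma exists_base2 (u v w : RSet) (h1 : MK.Adj u v) (h2 : MK.Adj v w) (h3 : u ≠ w) :
    ∃ s r, pm s r aR = u ∧ pm s r eR = v ∧ pm s r bR = w := by
  obtain ⟨t, ht, hu⟩ := gen_of_adj h1.symm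
  obtain ⟨t', ht', hw⟩ := gen_of_adj h2
  have htt : t ≠ t' := by
    rintro rfl
    exact h3 (hu.trans hw.symm)
  obtain ⟨s, hsa, hsb⟩ := sel2 t t' ht ht' htt
  refine ⟨s, v, ?_, pm_eR s v, ?_⟩
  · show rmul (sig s aR) v = u
    rw [hsa, ← hu]
  · show rmul (sig s bR) v = w
    rw [hsb, ← hw]

-- uniqueness: a `pm` fixing the base 2-arc is the identity
lemma fix_base2 : ∀ (s : Fin 6) (r : RSet), pm s r aR = aR → pm s r eR = eR →
    pm s r bR = bR → ∀ x, pm s r x = x := by decide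

-- existence at the base arc (eR, aR), rotations only
lemma exists_base1 (u v : RSet) (h1 : MK.Adj u v) :
    ∃ s r, rot s ∧ pm s r eR = u ∧ pm s r aR = v := by
  obtain ⟨t, ht, hv⟩ := gen_of_adj h1
  obtain ⟨s, hrot, hsa⟩ := sel1 t ht
  refine ⟨s, u, hrot, pm_eR s u, ?_⟩
  show rmul (sig s aR) u = v
  rw [hsa, ← hv]

lemma fix_base1 : ∀ (s : Fin 6) (r : RSet), rot s → pm s r eR = eR →
    pm s r aR = aR → ∀ x, pm s r x = x := by decide

lemma sig_determined : ∀ s t : Fin 6, sig s aR = sig t aR → sig s bR = sig t bR →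
    s = t := by decide

lemma pm_inj (s t : Fin 6) (r q : RSet) (h1 : pm s r eR = pm t q eR)
    (h2 : pm s r aR = pm t q aR) (h3 : pm s r bR = pm t q bR) : s = t ∧ r = q := by
  have hrq : r = q := by rwa [pm_eR, pm_eR] at h1
  subst hrq
  have ha : sig s aR = sig t aR := rmul_right_cancel r h2
  have hb : sig s bR = sig t bR := rmul_right_cancel r h3
  exact ⟨sig_determined s t ha hb, rfl⟩

lemma adjA : ∀ g, MK.Adj g (rmul aR g) := by decide
lemma adjB : ∀ g, MK.Adj g (rmul bR g) := by decide
lemma adjC : ∀ g, MK.Adj g (rmul cR g) := by decide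

def sA : Fin 3 → Fin 6 := ![0, 3, 4]

lemma sA_rot : ∀ i, rot (sA i) := by decide
lemma sA_inj : ∀ i j : Fin 3, sA i = sA j → i = j := by decide
lemma rot_surj : ∀ s, rot s → ∃ i : Fin 3, sA i = s := by decide

lemma pmE_apply (s : Fin 6) (r : RSet) (x : RSet) : (pmE s r) x = pm s r x := rfl

/-- Any two elements of `Bgrp` agreeing on a 2-arc are equal. -/
lemma eqB (g h : Equiv.Perm RSet) (hg : g ∈ Bgrp) (hh : h ∈ Bgrp)
    (u v w : RSet) (huv : MK.Adj u v) (hvw : MK.Adj v w) (huw : u ≠ w)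
    (e1 : g u = h u) (e2 : g v = h v) (e3 : g w = h w) : g = h := by
  obtain ⟨s, r, hp1, hp2, hp3⟩ := exists_base2 u v w huv hvw huw
  set p : Equiv.Perm RSet := pmE s r with hp
  have hpB : p ∈ Bgrp := ⟨s, r, rfl⟩
  set k : Equiv.Perm RSet := h⁻¹ * g with hk
  have hkB : k ∈ Bgrp := Bgrp.mul_mem (Bgrp.inv_mem hh) hg
  have hku : k u = u := by
    rw [hk, Equiv.Perm.mul_apply, e1]; exact h.symm_apply_apply u
  have hkv : k v = v := by
    rw [hk, Equiv.Perm.mul_apply, e2]; exact h.symm_apply_apply v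
  have hkw : k w = w := by
    rw [hk, Equiv.Perm.mul_apply, e3]; exact h.symm_apply_apply w
  set m : Equiv.Perm RSet := p⁻¹ * k * p with hm
  have hmB : m ∈ Bgrp := Bgrp.mul_mem (Bgrp.mul_mem (Bgrp.inv_mem hpB) hkB) hpB
  obtain ⟨s', r', hm'⟩ := hmB
  have hma : ∀ x y : RSet, p x = y → k y = y → m x = x := by
    intro x y hxy hky
    rw [hm, Equiv.Perm.mul_apply, Equiv.Perm.mul_apply, hxy, hky, ← hxy]
    exact p.symm_apply_apply x
  have h1 : pm s' r' aR = aR := by rw [← pmE_apply, ← hm']; exact hma aR u hp1 hku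
  have h2 : pm s' r' eR = eR := by rw [← pmE_apply, ← hm']; exact hma eR v hp2 hkv
  have h3 : pm s' r' bR = bR := by rw [← pmE_apply, ← hm']; exact hma bR w hp3 hkw
  have hm1 : m = 1 := by
    rw [hm']; exact Equiv.ext fun x => fix_base2 s' r' h1 h2 h3 x
  have hk1 : k = 1 := by
    have := congrArg (fun x => p * x * p⁻¹) hm1
    simpa [hm, mul_assoc] using this
  have : h⁻¹ * g = 1 := hk1
  rw [inv_mul_eq_one] at this
  exact this.symm

/-- Any two elements of `Agrp` agreeing on an arc are equal. -/
lemma eqA (g h : Equiv.Perm RSet) (hg : g ∈ Agrp) (hh : h ∈ Agrp)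
    (u v : RSet) (huv : MK.Adj u v)
    (e1 : g u = h u) (e2 : g v = h v) : g = h := by
  obtain ⟨s, r, hrot, hp1, hp2⟩ := exists_base1 u v huv
  set p : Equiv.Perm RSet := pmE s r with hp
  have hpA : p ∈ Agrp := ⟨s, r, hrot, rfl⟩
  set k : Equiv.Perm RSet := h⁻¹ * g with hk
  have hkA : k ∈ Agrp := Agrp.mul_mem (Agrp.inv_mem hh) hg
  have hku : k u = u := by
    rw [hk, Equiv.Perm.mul_apply, e1]; exact h.symm_apply_apply u
  have hkv : k v = v := by
    rw [hk, Equiv.Perm.mul_apply, e2]; exact h.symm_apply_apply v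
  set m : Equiv.Perm RSet := p⁻¹ * k * p with hm
  have hmA : m ∈ Agrp := Agrp.mul_mem (Agrp.mul_mem (Agrp.inv_mem hpA) hkA) hpA
  obtain ⟨s', r', hrot', hm'⟩ := hmA
  have hma : ∀ x y : RSet, p x = y → k y = y → m x = x := by
    intro x y hxy hky
    rw [hm, Equiv.Perm.mul_apply, Equiv.Perm.mul_apply, hxy, hky, ← hxy]
    exact p.symm_apply_apply x
  have h1 : pm s' r' eR = eR := by rw [← pmE_apply, ← hm']; exact hma eR u hp1 hku
  have h2 : pm s' r' aR = aR := by rw [← pmE_apply, ← hm']; exact hma aR v hp2 hkv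
  have hm1 : m = 1 := by
    rw [hm']; exact Equiv.ext fun x => fix_base1 s' r' hrot' h1 h2 x
  have hk1 : k = 1 := by
    have := congrArg (fun x => p * x * p⁻¹) hm1
    simpa [hm, mul_assoc] using this
  have : h⁻¹ * g = 1 := hk1
  rw [inv_mul_eq_one] at this
  exact this.symm

end Aux

/-- The Möbius–Kantor graph is a connected cubic graph on 16 vertices admitting a group of
automorphisms `B` sharply transitive on 2-arcs with a subgroup `A` sharply transitive
on arcs (so `|B| = 96` and `|A| = 48`). -/
theorem statement6 :
    MK.Connected ∧ (∀ v : RSet, Nat.card (MK.neighborSet v) = 3) ∧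
    Nat.card RSet = 16 ∧
    ∃ A B : Subgroup (Equiv.Perm RSet), A ≤ B ∧
      (∀ g ∈ B, IsGraphAut MK g) ∧
      SharplyTwoArcTransitiveOn MK B ∧ SharplyArcTransitiveOn MK A ∧
      Nat.card B = 96 ∧ Nat.card A = 48 := by
  have hreach : ∀ v : RSet, MK.Reachable eR v := by
    have h0000 : MK.Reachable eR eR := SimpleGraph.Reachable.refl _
    have h1000 : MK.Reachable eR (1,0,0,0) := h0000.trans (adjA _).reachable
    have h0100 : MK.Reachable eR (0,1,0,0) := h0000.trans (adjB _).reachable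
    have h0010 : MK.Reachable eR (0,0,1,0) := h0000.trans (adjC _).reachable
    have h1100 : MK.Reachable eR (1,1,0,0) := h0100.trans (adjA _).reachable
    have h1010 : MK.Reachable eR (1,0,1,0) := h0010.trans (adjA _).reachable
    have h0110 : MK.Reachable eR (0,1,1,0) := h0010.trans (adjB _).reachable
    have h1011 : MK.Reachable eR (1,0,1,1) := h1000.trans (adjC _).reachable
    have h1101 : MK.Reachable eR (1,1,0,1) := h1000.trans (adjB _).reachable
    have h0111 : MK.Reachable eR (0,1,1,1) := h0100.trans (adjC _).reachable
    have h1001 : MK.Reachable eR (1,0,0,1) := h1100.trans (adjB _).reachable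
    have h0101 : MK.Reachable eR (0,1,0,1) := h1101.trans (adjA _).reachable
    have h1110 : MK.Reachable eR (1,1,1,0) := h1011.trans (adjB _).reachable
    have h0011 : MK.Reachable eR (0,0,1,1) := h1011.trans (adjA _).reachable
    have h0001 : MK.Reachable eR (0,0,0,1) := h0101.trans (adjB _).reachable
    have h1111 : MK.Reachable eR (1,1,1,1) := h1101.trans (adjC _).reachable
    intro v
    obtain ⟨x, y, z, w⟩ := v
    fin_cases x <;> fin_cases y <;> fin_cases z <;> fin_cases w <;>
      first
        | exact h0000 | exact h0001 | exact h0010 | exact h0011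
        | exact h0100 | exact h0101 | exact h0110 | exact h0111
        | exact h1000 | exact h1001 | exact h1010 | exact h1011
        | exact h1100 | exact h1101 | exact h1110 | exact h1111
  refine ⟨⟨fun u v => (hreach u).symm.trans (hreach v)⟩, ?_, ?_, ?_⟩
  · intro v
    rw [Nat.card_eq_fintype_card, SimpleGraph.card_neighborSet_eq_degree]
    revert v; decide
  · rw [Nat.card_eq_fintype_card]; decide
  refine ⟨Agrp, Bgrp, ?_, ?_, ?_, ?_, ?_, ?_⟩
  · rintro g ⟨s, r, _, rfl⟩
    exact ⟨s, r, rfl⟩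
  · rintro g ⟨s, r, rfl⟩
    exact fun u v => pm_adj s r u v
  · intro u v w u' v' w' h1 h2 h3 h1' h2' h3'
    obtain ⟨s1, r1, ha1, hv1, hb1⟩ := exists_base2 u v w h1 h2 h3
    obtain ⟨s2, r2, ha2, hv2, hb2⟩ := exists_base2 u' v' w' h1' h2' h3'
    set g1 : Equiv.Perm RSet := pmE s1 r1 with hg1
    set g2 : Equiv.Perm RSet := pmE s2 r2 with hg2
    have hg1B : g1 ∈ Bgrp := ⟨s1, r1, rfl⟩
    have hg2B : g2 ∈ Bgrp := ⟨s2, r2, rfl⟩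
    have hgB : g2 * g1⁻¹ ∈ Bgrp := Bgrp.mul_mem hg2B (Bgrp.inv_mem hg1B)
    have hi1 : g1⁻¹ u = aR := g1.symm_apply_eq.mpr ha1.symm
    have hi2 : g1⁻¹ v = eR := g1.symm_apply_eq.mpr hv1.symm
    have hi3 : g1⁻¹ w = bR := g1.symm_apply_eq.mpr hb1.symm
    have c1 : (g2 * g1⁻¹) u = u' := by
      rw [Equiv.Perm.mul_apply, hi1]; exact ha2
    have c2 : (g2 * g1⁻¹) v = v' := by
      rw [Equiv.Perm.mul_apply, hi2]; exact hv2
    have c3 : (g2 * g1⁻¹) w = w' := by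
      rw [Equiv.Perm.mul_apply, hi3]; exact hb2
    refine ⟨⟨g2 * g1⁻¹, hgB⟩, ⟨c1, c2, c3⟩, ?_⟩
    rintro ⟨h, hhB⟩ ⟨d1, d2, d3⟩
    exact Subtype.ext (eqB h (g2 * g1⁻¹) hhB hgB u v w h1 h2 h3
      (by rw [d1, c1]) (by rw [d2, c2]) (by rw [d3, c3]))
  · intro u v u' v' h1 h1'
    obtain ⟨s1, r1, hr1, ha1, hv1⟩ := exists_base1 u v h1
    obtain ⟨s2, r2, hr2, ha2, hv2⟩ := exists_base1 u' v' h1'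
    set g1 : Equiv.Perm RSet := pmE s1 r1 with hg1
    set g2 : Equiv.Perm RSet := pmE s2 r2 with hg2
    have hg1A : g1 ∈ Agrp := ⟨s1, r1, hr1, rfl⟩
    have hg2A : g2 ∈ Agrp := ⟨s2, r2, hr2, rfl⟩
    have hgA : g2 * g1⁻¹ ∈ Agrp := Agrp.mul_mem hg2A (Agrp.inv_mem hg1A)
    have hi1 : g1⁻¹ u = eR := g1.symm_apply_eq.mpr ha1.symm
    have hi2 : g1⁻¹ v = aR := g1.symm_apply_eq.mpr hv1.symm
    have c1 : (g2 * g1⁻¹) u = u' := by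
      rw [Equiv.Perm.mul_apply, hi1]; exact ha2
    have c2 : (g2 * g1⁻¹) v = v' := by
      rw [Equiv.Perm.mul_apply, hi2]; exact hv2
    refine ⟨⟨g2 * g1⁻¹, hgA⟩, ⟨c1, c2⟩, ?_⟩
    rintro ⟨h, hhA⟩ ⟨d1, d2⟩
    exact Subtype.ext (eqA h (g2 * g1⁻¹) hhA hgA u v h1
      (by rw [d1, c1]) (by rw [d2, c2]))
  · have e : (Fin 6 × RSet) ≃ Bgrp := by
      refine Equiv.ofBijective (fun p => ⟨pmE p.1 p.2, ⟨p.1, p.2, rfl⟩⟩) ⟨?_, ?_⟩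
      · rintro ⟨s, r⟩ ⟨t, q⟩ hpq
        have hEq : pmE s r = pmE t q := congrArg Subtype.val hpq
        have h1 : pm s r eR = pm t q eR := by
          rw [← pmE_apply, ← pmE_apply, hEq]
        have h2 : pm s r aR = pm t q aR := by
          rw [← pmE_apply, ← pmE_apply, hEq]
        have h3 : pm s r bR = pm t q bR := by
          rw [← pmE_apply, ← pmE_apply, hEq]
        obtain ⟨hs, hr⟩ := pm_inj s t r q h1 h2 h3
        exact Prod.ext hs hr
      · rintro ⟨g, s, r, rfl⟩
        exact ⟨(s, r), rfl⟩
    rw [Nat.card_congr e.symm, Nat.card_eq_fintype_card]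
    decide
  · have e : (Fin 3 × RSet) ≃ Agrp := by
      refine Equiv.ofBijective
        (fun p => ⟨pmE (sA p.1) p.2, ⟨sA p.1, p.2, sA_rot p.1, rfl⟩⟩) ⟨?_, ?_⟩
      · rintro ⟨s, r⟩ ⟨t, q⟩ hpq
        have hEq : pmE (sA s) r = pmE (sA t) q := congrArg Subtype.val hpq
        have h1 : pm (sA s) r eR = pm (sA t) q eR := by
          rw [← pmE_apply, ← pmE_apply, hEq]
        have h2 : pm (sA s) r aR = pm (sA t) q aR := by
          rw [← pmE_apply, ← pmE_apply, hEq]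
        have h3 : pm (sA s) r bR = pm (sA t) q bR := by
          rw [← pmE_apply, ← pmE_apply, hEq]
        obtain ⟨hs, hr⟩ := pm_inj (sA s) (sA t) r q h1 h2 h3
        exact Prod.ext (sA_inj s t hs) hr
      · rintro ⟨g, s, r, hs, rfl⟩
        obtain ⟨i, rfl⟩ := rot_surj s hs
        exact ⟨(i, r), rfl⟩
    rw [Nat.card_congr e.symm, Nat.card_eq_fintype_card]
    decide
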